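/- Let x₀, …, x_{n−1} ∈ ℍ be pairwise distinct and such that no three of them are automorphically equivalent. If coefficients a₀, …, a_{n−1} ∈ ℍ and b₀, …, b_{n−1} ∈ ℍ satisfy Σ_{ℓ=0}^{n−1} a_ℓ·x_m^ℓ = Σ_{ℓ=0}^{n−1} b_ℓ·x_m^ℓ for every m = 0, …, n−1, then a_ℓ = b_ℓ for all ℓ. (Uniqueness of one-sided quaternion interpolation polynomials.) -/

import Mathlib

open Quaternion

/-- Two quaternions are automorphically equivalent iff they have the same real part
and the same norm of imaginary part (equivalently, they are conjugate). -/
def AutEquiv (a b : ℍ[ℝ]) : Prop := a.re = b.re ∧ ‖a.im‖ = ‖b.im‖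

open Polynomial

lemma normSq_split (q : ℍ[ℝ]) : normSq q = q.re^2 + normSq q.im := by
  rw [Quaternion.normSq_def', Quaternion.normSq_def']; simp; ring

lemma autEquiv_iff {a b : ℍ[ℝ]} : AutEquiv a b ↔ a.re = b.re ∧ normSq a.im = normSq b.im := by
  unfold AutEquiv
  constructor
  · rintro ⟨h1, h2⟩
    refine ⟨h1, ?_⟩
    rw [Quaternion.normSq_eq_norm_mul_self, Quaternion.normSq_eq_norm_mul_self, h2]
  · rintro ⟨h1, h2⟩
    refine ⟨h1, ?_⟩
    rw [Quaternion.normSq_eq_norm_mul_self, Quaternion.normSq_eq_norm_mul_self] at h2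
    exact (mul_self_inj_of_nonneg (norm_nonneg _) (norm_nonneg _)).mp h2

lemma autEquiv_symm {a b : ℍ[ℝ]} (h : AutEquiv a b) : AutEquiv b a := ⟨h.1.symm, h.2.symm⟩

lemma autEquiv_trans {a b c : ℍ[ℝ]} (h : AutEquiv a b) (h' : AutEquiv b c) : AutEquiv a c :=
  ⟨h.1.trans h'.1, h.2.trans h'.2⟩

lemma autEquiv_normSq {a b : ℍ[ℝ]} (h : AutEquiv a b) : normSq a = normSq b := by
  rw [normSq_split a, normSq_split b, h.1, (autEquiv_iff.mp h).2]

lemma autEquiv_of_re_normSq {a b : ℍ[ℝ]} (h1 : a.re = b.re) (h2 : normSq a = normSq b) :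
    AutEquiv a b := by
  rw [normSq_split a, normSq_split b, h1] at h2
  exact autEquiv_iff.mpr ⟨h1, by linarith⟩

lemma re_mul_comm (x y : ℍ[ℝ]) : (x*y).re = (y*x).re := by
  simp [Quaternion.re_mul]; ring

lemma char_self (z : ℍ[ℝ]) :
    z*z - ((2*z.re : ℝ) : ℍ[ℝ]) * z + ((normSq z : ℝ) : ℍ[ℝ]) = 0 := by
  have h1 : ((2*z.re : ℝ) : ℍ[ℝ]) = z + star z := (Quaternion.self_add_star' z).symm
  have h2 : ((normSq z : ℝ) : ℍ[ℝ]) = star z * z := (Quaternion.star_mul_self z).symm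
  rw [h1, h2]; noncomm_ring

lemma char_of_autEquiv {z x : ℍ[ℝ]} (h : AutEquiv z x) :
    z*z - ((2*x.re : ℝ) : ℍ[ℝ]) * z + ((normSq x : ℝ) : ℍ[ℝ]) = 0 := by
  rw [← h.1, ← autEquiv_normSq h]; exact char_self z

/-- conjugation preserves the class -/
lemma autEquiv_conj (v z : ℍ[ℝ]) (hv : v ≠ 0) : AutEquiv (v * z * v⁻¹) z := by
  have hre : (v * z * v⁻¹).re = z.re := by
    rw [re_mul_comm (v*z) v⁻¹, ← mul_assoc, inv_mul_cancel₀ hv, one_mul]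
  have hns : normSq (v * z * v⁻¹) = normSq z := by
    have h0 : normSq v ≠ 0 := by simpa [Quaternion.normSq_eq_zero] using hv
    rw [map_mul, map_mul, map_inv₀]
    field_simp
  exact autEquiv_of_re_normSq hre hns

/-- converse of char_of_autEquiv -/
lemma autEquiv_of_char {z x : ℍ[ℝ]}
    (h : z*z - ((2*x.re : ℝ) : ℍ[ℝ]) * z + ((normSq x : ℝ) : ℍ[ℝ]) = 0) : AutEquiv z x := by
  have hz := char_self z
  -- subtract: (2*(x.re - z.re)) * z = (normSq x - normSq z)
  have key : ((2*(x.re - z.re) : ℝ) : ℍ[ℝ]) * z = ((normSq x - normSq z : ℝ) : ℍ[ℝ]) := by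
    have key0 : ((2*(x.re - z.re) : ℝ) : ℍ[ℝ]) * z - ((normSq x - normSq z : ℝ) : ℍ[ℝ])
        = (z*z - ((2*z.re:ℝ):ℍ[ℝ])*z + ((normSq z:ℝ):ℍ[ℝ]))
          - (z*z - ((2*x.re:ℝ):ℍ[ℝ])*z + ((normSq x:ℝ):ℍ[ℝ])) := by
      push_cast
      noncomm_ring
    have : ((2*(x.re - z.re) : ℝ) : ℍ[ℝ]) * z - ((normSq x - normSq z : ℝ) : ℍ[ℝ]) = 0 := by
      rw [key0, h, hz, sub_zero]
    exact sub_eq_zero.mp this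
  by_cases hre : z.re = x.re
  · apply autEquiv_of_re_normSq hre
    rw [hre] at key
    simp only [sub_self, mul_zero, zero_mul] at key
    have : ((0:ℝ) : ℍ[ℝ]) = ((normSq x - normSq z : ℝ) : ℍ[ℝ]) := by
      simpa using key
    have := Quaternion.coe_injective this
    linarith
  · exfalso
    -- z is real
    have hα : (2*(x.re - z.re) : ℝ) ≠ 0 := by
      intro hc
      apply hre
      have : x.re - z.re = 0 := by linarith
      linarith
    set r : ℝ := (2*(x.re - z.re))⁻¹ * (normSq x - normSq z) with hr
    have hzr : z = (r : ℍ[ℝ]) := by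
      have : ((((2*(x.re - z.re) : ℝ))⁻¹ : ℝ) : ℍ[ℝ]) * (((2*(x.re - z.re) : ℝ) : ℍ[ℝ]) * z)
          = ((((2*(x.re - z.re) : ℝ))⁻¹ : ℝ) : ℍ[ℝ]) * ((normSq x - normSq z : ℝ) : ℍ[ℝ]) := by
        rw [key]
      rw [← mul_assoc, ← Quaternion.coe_mul, inv_mul_cancel₀ hα] at this
      simpa [hr, Quaternion.coe_mul] using this
    rw [hzr] at h
    have hre' : r ≠ x.re := by
      intro hc; apply hre; rw [hzr, Quaternion.re_coe, hc]
    have hrr : r*r - 2*x.re*r + normSq x = 0 := by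
      have h2 : ((r * r - 2 * x.re * r + normSq x : ℝ) : ℍ[ℝ]) = ((0:ℝ) : ℍ[ℝ]) := by
        push_cast; rw [← h]; norm_cast
      exact Quaternion.coe_injective h2
    have hnim : 0 ≤ normSq x.im := normSq_nonneg
    have hsplit := normSq_split x
    have hpos : 0 < (r - x.re)^2 := by
      have : r - x.re ≠ 0 := sub_ne_zero.mpr hre'
      positivity
    nlinarith [hpos, hrr, hsplit, hnim]

/-- key conjugation identity for two equivalent elements -/
lemma conj_eq_star {a b : ℍ[ℝ]} (hne : a ≠ b) (h : AutEquiv a b) :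
    (b - a) * b * (b - a)⁻¹ = star a := by
  have hv : b - a ≠ 0 := sub_ne_zero.mpr (Ne.symm hne)
  have hmain : (b - a) * b = star a * (b - a) := by
    have hchar : b*b - ((2*a.re : ℝ) : ℍ[ℝ]) * b + ((normSq a : ℝ) : ℍ[ℝ]) = 0 :=
      char_of_autEquiv (autEquiv_symm h)
    have h1 : ((2*a.re : ℝ) : ℍ[ℝ]) = a + star a := (Quaternion.self_add_star' a).symm
    have h2 : ((normSq a : ℝ) : ℍ[ℝ]) = star a * a := (Quaternion.star_mul_self a).symm
    rw [h1, h2] at hchar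
    have : (b - a) * b - star a * (b - a) = b*b - (a + star a) * b + star a * a := by
      noncomm_ring
    have h0 : (b - a) * b - star a * (b - a) = 0 := by rw [this, hchar]
    exact sub_eq_zero.mp h0
  rw [hmain, mul_assoc, mul_inv_cancel₀ hv, mul_one]

lemma quat_conj_pow (v z : ℍ[ℝ]) (hvz : v ≠ 0) (i : ℕ) :
    (v * z * v⁻¹) ^ i = v * z ^ i * v⁻¹ := by
  induction i with
  | zero => simp [mul_inv_cancel₀ hvz]
  | succ k ih =>
    rw [pow_succ, ih, pow_succ]
    rw [mul_assoc (v * z ^ k) v⁻¹, ← mul_assoc v⁻¹, ← mul_assoc v⁻¹,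
      inv_mul_cancel₀ hvz, one_mul]
    noncomm_ring

/-- the fundamental product-evaluation rule for one-sided polynomials -/
lemma eval_mul_rule (p q : Polynomial ℍ[ℝ]) (z : ℍ[ℝ]) :
    (p * q).eval z = p.eval (q.eval z * z * (q.eval z)⁻¹) * q.eval z := by
  induction p using Polynomial.induction_on' with
  | add f g hf hg => rw [add_mul, eval_add, eval_add, hf, hg, add_mul]
  | monomial i c =>
    set v := q.eval z with hv
    have hcomm : (monomial i c : Polynomial ℍ[ℝ]) * q = C c * (q * X ^ i) := by
      rw [← C_mul_X_pow_eq_monomial, mul_assoc, X_pow_mul]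
    rw [hcomm, eval_C_mul, eval_mul_X_pow, eval_monomial]
    by_cases hvz : v = 0
    · rw [← hv, hvz]
      simp
    · rw [quat_conj_pow v z hvz i, ← hv]
      have hcv : v * z ^ i * v⁻¹ * v = v * z ^ i := by
        rw [mul_assoc, inv_mul_cancel₀ hvz, mul_one]
      rw [mul_assoc c (v * z ^ i * v⁻¹) v, hcv]

/-- right division with remainder by X - C c -/
lemma div_lemma : ∀ (N : ℕ) (p : Polynomial ℍ[ℝ]) (c : ℍ[ℝ]), p.degree ≤ (N : ℕ) →
    ∃ q : Polynomial ℍ[ℝ], q.degree < (N : ℕ) ∧ p = q * (X - C c) + C (p.eval c) := by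
  intro N
  induction N with
  | zero =>
    intro p c hdeg
    refine ⟨0, ?_, ?_⟩
    · exact lt_of_le_of_lt bot_le (by exact_mod_cast WithBot.bot_lt_coe 0)
    · rw [zero_mul, zero_add]
      have hdeg0 : p.degree ≤ 0 := by exact_mod_cast hdeg
      rw [Polynomial.eq_C_of_degree_le_zero hdeg0]
      simp
  | succ N ih =>
    intro p c hdeg
    by_cases hle : p.degree ≤ (N : ℕ)
    · obtain ⟨q, hq1, hq2⟩ := ih p c hle
      exact ⟨q, lt_trans hq1 (by exact_mod_cast Nat.lt_succ_self N), hq2⟩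
    · push_neg at hle
      set a := p.coeff (N+1) with ha
      set p' := p - (monomial N a) * (X - C c) with hp'
      have hmm : (monomial N a : Polynomial ℍ[ℝ]) * (X - C c)
          = monomial (N+1) a - monomial N (a * c) := by
        rw [mul_sub, monomial_mul_X]
        congr 1
        rw [← C_mul_X_pow_eq_monomial, ← C_mul_X_pow_eq_monomial, mul_assoc, X_pow_mul,
          ← mul_assoc, ← C_mul]
      have hdeg' : p'.degree ≤ (N : ℕ) := by
        rw [Polynomial.degree_le_iff_coeff_zero]
        intro m hm
        have hm' : (N : ℕ) < m := by exact_mod_cast hm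
        rw [hp', hmm]
        simp only [coeff_sub, coeff_monomial]
        rcases lt_or_eq_of_le (Nat.succ_le_of_lt hm') with h1 | h1
        · have hpz : p.coeff m = 0 := by
            apply Polynomial.coeff_eq_zero_of_degree_lt
            exact lt_of_le_of_lt hdeg (by exact_mod_cast h1)
          have : ¬ (N + 1 = m) := by omega
          have hnm : ¬ (N = m) := by omega
          simp [hpz, this, hnm]
        · have : N + 1 = m := h1
          have hnm : ¬ (N = m) := by omega
          simp [← this, ha, hnm]
      obtain ⟨q', hq1, hq2⟩ := ih p' c hdeg'
      have heval : p'.eval c = p.eval c := by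
        rw [hp', eval_sub, eval_mul_rule (monomial N a) (X - C c) c]
        simp
      refine ⟨q' + monomial N a, ?_, ?_⟩
      · apply lt_of_le_of_lt (Polynomial.degree_add_le _ _)
        apply max_lt (lt_trans hq1 (by exact_mod_cast Nat.lt_succ_self N))
        exact lt_of_le_of_lt (Polynomial.degree_monomial_le N a)
          (by exact_mod_cast Nat.lt_succ_self N)
      · have h3 : p - (monomial N a) * (X - C c) = q' * (X - C c) + C (p.eval c) := by
          rw [← heval, ← hp']
          exact hq2
        have h4 := eq_add_of_sub_eq h3
        refine h4.trans ?_
        rw [add_mul]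
        abel

lemma degree_lt_succ' {p : Polynomial ℍ[ℝ]} {t : ℕ} (h : p.degree < ((t+1 : ℕ) : WithBot ℕ)) :
    p.degree ≤ (t : ℕ) := by
  by_cases hp : p = 0
  · simp [hp]
  · rw [Polynomial.degree_eq_natDegree hp] at h ⊢
    have : p.natDegree < t + 1 := by exact_mod_cast h
    exact_mod_cast Nat.lt_succ_iff.mp this

lemma degree_lt_zero' {p : Polynomial ℍ[ℝ]} (h : p.degree < ((0 : ℕ) : WithBot ℕ)) : p = 0 := by
  rw [Polynomial.degree_eq_bot.symm]
  exact Nat.WithBot.lt_zero_iff.mp (by exact_mod_cast h)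

lemma chi_eval (a z : ℍ[ℝ]) :
    ((X - C (star a)) * (X - C a) : Polynomial ℍ[ℝ]).eval z
      = z*z - ((2*a.re : ℝ) : ℍ[ℝ]) * z + ((normSq a : ℝ) : ℍ[ℝ]) := by
  have hX : (X : Polynomial ℍ[ℝ]) * C a = C a * X := X_mul
  have hexp : ((X - C (star a)) * (X - C a) : Polynomial ℍ[ℝ])
      = X*X - C (a + star a) * X + C (star a * a) := by
    have h0 : ((X - C (star a)) * (X - C a) : Polynomial ℍ[ℝ])
        = X*X - X * C a - C (star a) * X + C (star a) * C a := by noncomm_ring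
    rw [h0, hX, C_add, add_mul, C_mul]
    abel
  rw [hexp, eval_add, eval_sub, eval_mul_X, eval_X, eval_C_mul, eval_X, eval_C,
    Quaternion.self_add_star' a, Quaternion.star_mul_self a]

lemma key_lemma : ∀ (n : ℕ) (s : Finset ℍ[ℝ]), s.card ≤ n →
    (∀ a ∈ s, ∀ b ∈ s, ∀ c ∈ s, a ≠ b → a ≠ c → b ≠ c → ¬(AutEquiv a b ∧ AutEquiv b c)) →
    ∀ p : Polynomial ℍ[ℝ], p.degree < ((s.card : ℕ) : WithBot ℕ) →
    (∀ z ∈ s, p.eval z = 0) → p = 0 := by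
  classical
  intro n
  induction n with
  | zero =>
    intro s hcard h3 p hdeg _
    rw [Nat.le_zero.mp hcard] at hdeg
    exact degree_lt_zero' hdeg
  | succ n ih =>
    intro s hcard h3 p hdeg hroot
    by_cases hs0 : s.card = 0
    · rw [hs0] at hdeg
      exact degree_lt_zero' hdeg
    by_cases hAB : ∃ a ∈ s, ∃ b ∈ s, a ≠ b ∧ AutEquiv a b
    · -- Case A: two equivalent nodes
      obtain ⟨a, ha, b, hb, hab, hEq⟩ := hAB
      have hcard2 : 2 ≤ s.card := Finset.one_lt_card.mpr ⟨a, ha, b, hb, hab⟩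
      obtain ⟨k, hk⟩ : ∃ k, s.card = k + 2 := ⟨s.card - 2, by omega⟩
      rw [hk] at hdeg
      have hdeg1 : p.degree ≤ ((k+1 : ℕ) : WithBot ℕ) := degree_lt_succ' (by exact_mod_cast hdeg)
      obtain ⟨q, hqdeg, hqeq⟩ := div_lemma (k+1) p a hdeg1
      rw [hroot a ha, map_zero, add_zero] at hqeq
      -- b is a root too, giving q.eval (star a) = 0
      have hv : b - a ≠ 0 := sub_ne_zero.mpr (Ne.symm hab)
      have hqb : q.eval (star a) = 0 := by
        have h0 : (0 : ℍ[ℝ]) = q.eval ((b-a) * b * (b-a)⁻¹) * (b - a) := by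
          rw [← hroot b hb, hqeq, eval_mul_rule q (X - C a) b, eval_sub, eval_X, eval_C]
        rw [conj_eq_star hab hEq] at h0
        rcases mul_eq_zero.mp h0.symm with h | h
        · exact h
        · exact absurd h hv
      have hqdeg1 : q.degree ≤ ((k : ℕ) : WithBot ℕ) := degree_lt_succ' (by exact_mod_cast hqdeg)
      obtain ⟨r, hrdeg, hreq⟩ := div_lemma k q (star a) hqdeg1
      rw [hqb, map_zero, add_zero] at hreq
      have hpfac : p = r * ((X - C (star a)) * (X - C a)) := by
        rw [hqeq, hreq, mul_assoc]
      -- the remaining nodes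
      set s'' := (s.erase a).erase b with hs''
      have hbmem : b ∈ s.erase a := Finset.mem_erase.mpr ⟨hab.symm, hb⟩
      have hcard'' : s''.card = k := by
        rw [hs'', Finset.card_erase_of_mem hbmem, Finset.card_erase_of_mem ha, hk]
        omega
      have hrroot : ∀ z ∈ s'', r.eval z = 0 := by
        intro z hz
        have hzs : z ∈ s := Finset.mem_of_mem_erase (Finset.mem_of_mem_erase hz)
        have hzb : z ≠ b := (Finset.mem_erase.mp hz).1
        have hza : z ≠ a := (Finset.mem_erase.mp (Finset.mem_of_mem_erase hz)).1
        have hnae : ¬ AutEquiv a z := by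
          intro hc
          exact h3 b hb a ha z hzs hab.symm hzb.symm (Ne.symm hza) ⟨autEquiv_symm hEq, hc⟩
        set w := z*z - ((2*a.re : ℝ) : ℍ[ℝ]) * z + ((normSq a : ℝ) : ℍ[ℝ]) with hw
        have hwne : w ≠ 0 := by
          intro hc
          exact hnae (autEquiv_symm (autEquiv_of_char hc))
        have hcw : Commute z w := by
          have c1 : Commute z (z*z) := (Commute.refl z).mul_right (Commute.refl z)
          have c2 : Commute z (((2*a.re : ℝ) : ℍ[ℝ]) * z) :=
            ((Quaternion.coe_commute (2*a.re) z).symm).mul_right (Commute.refl z)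
          have c3 : Commute z (((normSq a : ℝ) : ℍ[ℝ])) := (Quaternion.coe_commute _ z).symm
          exact (c1.sub_right c2).add_right c3
        have hconj : w * z * w⁻¹ = z := by
          rw [← hcw.eq, mul_assoc, mul_inv_cancel₀ hwne, mul_one]
        have h0 : (0 : ℍ[ℝ]) = r.eval z * w := by
          rw [← hroot z hzs, hpfac, eval_mul_rule r ((X - C (star a)) * (X - C a)) z,
            chi_eval a z, ← hw, hconj]
        rcases mul_eq_zero.mp h0.symm with h | h
        · exact h
        · exact absurd h hwne
      have h3'' : ∀ a' ∈ s'', ∀ b' ∈ s'', ∀ c' ∈ s'', a' ≠ b' → a' ≠ c' → b' ≠ c' →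
          ¬(AutEquiv a' b' ∧ AutEquiv b' c') := by
        intro a' ha' b' hb' c' hc' h1 h2 h4
        exact h3 a' (Finset.mem_of_mem_erase (Finset.mem_of_mem_erase ha'))
          b' (Finset.mem_of_mem_erase (Finset.mem_of_mem_erase hb'))
          c' (Finset.mem_of_mem_erase (Finset.mem_of_mem_erase hc')) h1 h2 h4
      have hr0 : r = 0 := by
        apply ih s'' (by omega) h3'' r _ hrroot
        rw [hcard'']
        exact hrdeg
      rw [hpfac, hr0, zero_mul]
    · -- Case B: no two nodes equivalent
      push_neg at hAB
      have hne : s.Nonempty := Finset.card_pos.mp (Nat.pos_of_ne_zero hs0)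
      obtain ⟨c, hc⟩ := hne
      obtain ⟨m, hm⟩ : ∃ m, s.card = m + 1 := ⟨s.card - 1, by omega⟩
      rw [hm] at hdeg
      have hdeg1 : p.degree ≤ ((m : ℕ) : WithBot ℕ) := degree_lt_succ' (by exact_mod_cast hdeg)
      obtain ⟨q, hqdeg, hqeq⟩ := div_lemma m p c hdeg1
      rw [hroot c hc, map_zero, add_zero] at hqeq
      set f : ℍ[ℝ] → ℍ[ℝ] := fun z => (z - c) * z * (z - c)⁻¹ with hf
      have hfequiv : ∀ z ∈ s.erase c, AutEquiv (f z) z := by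
        intro z hz
        exact autEquiv_conj _ _ (sub_ne_zero.mpr (Finset.mem_erase.mp hz).1)
      have hinj : Set.InjOn f (s.erase c) := by
        intro z1 hz1 z2 hz2 hfz
        have hz1' := Finset.mem_coe.mp hz1
        have hz2' := Finset.mem_coe.mp hz2
        by_contra hne'
        apply hAB z1 (Finset.mem_of_mem_erase hz1') z2 (Finset.mem_of_mem_erase hz2') hne'
        exact autEquiv_trans (autEquiv_symm (hfequiv z1 hz1'))
          (autEquiv_trans (by rw [hfz]; exact ⟨rfl, rfl⟩) (hfequiv z2 hz2'))
      set s' := (s.erase c).image f with hs'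
      have hcard' : s'.card = m := by
        rw [hs', Finset.card_image_of_injOn hinj, Finset.card_erase_of_mem hc, hm]
        omega
      have hqroot : ∀ z' ∈ s', q.eval z' = 0 := by
        intro z' hz'
        obtain ⟨z, hz, rfl⟩ := Finset.mem_image.mp hz'
        have hzc : z - c ≠ 0 := sub_ne_zero.mpr (Finset.mem_erase.mp hz).1
        have h0 : (0 : ℍ[ℝ]) = q.eval ((z-c) * z * (z-c)⁻¹) * (z - c) := by
          rw [← hroot z (Finset.mem_of_mem_erase hz), hqeq, eval_mul_rule q (X - C c) z,
            eval_sub, eval_X, eval_C]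
        rcases mul_eq_zero.mp h0.symm with h | h
        · exact h
        · exact absurd h hzc
      have h3' : ∀ a' ∈ s', ∀ b' ∈ s', ∀ c' ∈ s', a' ≠ b' → a' ≠ c' → b' ≠ c' →
          ¬(AutEquiv a' b' ∧ AutEquiv b' c') := by
        intro a' ha' b' hb' c' hc' h1 _ _ hcon
        obtain ⟨z1, hz1, rfl⟩ := Finset.mem_image.mp ha'
        obtain ⟨z2, hz2, rfl⟩ := Finset.mem_image.mp hb'
        have hz12 : z1 ≠ z2 := fun hcc => h1 (by rw [hcc])
        apply hAB z1 (Finset.mem_of_mem_erase hz1) z2 (Finset.mem_of_mem_erase hz2) hz12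
        exact autEquiv_trans (autEquiv_symm (hfequiv z1 hz1))
          (autEquiv_trans hcon.1 (hfequiv z2 hz2))
      have hq0 : q = 0 := by
        apply ih s' (by omega) h3' q _ hqroot
        rw [hcard']
        exact hqdeg
      rw [hqeq, hq0, zero_mul]


/-- Uniqueness of one-sided quaternion interpolation polynomials: if the nodes are
pairwise distinct and no three of them are automorphically equivalent, then two
coefficient sequences agreeing at all nodes are equal. -/
theorem onesided_quaternion_interpolation_unique (n : ℕ) (x : Fin n → ℍ[ℝ])
    (hdist : Function.Injective x)
    (hthree : ∀ l m r : Fin n, l ≠ m → l ≠ r → m ≠ r →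
      ¬(AutEquiv (x l) (x m) ∧ AutEquiv (x m) (x r)))
    (a b : Fin n → ℍ[ℝ])
    (h : ∀ m : Fin n, ∑ ℓ : Fin n, a ℓ * (x m) ^ (ℓ : ℕ)
        = ∑ ℓ : Fin n, b ℓ * (x m) ^ (ℓ : ℕ)) :
    ∀ ℓ : Fin n, a ℓ = b ℓ := by
  classical
  set p : Polynomial ℍ[ℝ] := ∑ ℓ : Fin n, monomial (ℓ : ℕ) (a ℓ - b ℓ) with hp
  set s : Finset ℍ[ℝ] := Finset.image x Finset.univ with hs
  have hcard : s.card = n := by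
    rw [hs, Finset.card_image_of_injective _ hdist, Finset.card_univ, Fintype.card_fin]
  have hdeg : p.degree < ((s.card : ℕ) : WithBot ℕ) := by
    rw [hcard, hp]
    apply lt_of_le_of_lt (Polynomial.degree_sum_le _ _)
    rw [Finset.sup_lt_iff (by exact_mod_cast WithBot.bot_lt_coe n)]
    intro ℓ _
    exact lt_of_le_of_lt (Polynomial.degree_monomial_le _ _) (by exact_mod_cast ℓ.isLt)
  have hroot : ∀ z ∈ s, p.eval z = 0 := by
    intro z hz
    obtain ⟨m, _, rfl⟩ := Finset.mem_image.mp hz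
    rw [hp, eval_finset_sum]
    simp only [eval_monomial, sub_mul]
    rw [Finset.sum_sub_distrib, h m, sub_self]
  have h3 : ∀ a' ∈ s, ∀ b' ∈ s, ∀ c' ∈ s, a' ≠ b' → a' ≠ c' → b' ≠ c' →
      ¬(AutEquiv a' b' ∧ AutEquiv b' c') := by
    intro a' ha' b' hb' c' hc' h1 h2 h4
    obtain ⟨l, _, rfl⟩ := Finset.mem_image.mp ha'
    obtain ⟨m, _, rfl⟩ := Finset.mem_image.mp hb'
    obtain ⟨r, _, rfl⟩ := Finset.mem_image.mp hc'
    exact hthree l m r (fun hc => h1 (by rw [hc])) (fun hc => h2 (by rw [hc]))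
      (fun hc => h4 (by rw [hc]))
  have hp0 : p = 0 := key_lemma n s (le_of_eq hcard) h3 p hdeg hroot
  intro ℓ
  have hcoeff : p.coeff (ℓ : ℕ) = a ℓ - b ℓ := by
    rw [hp, Polynomial.finset_sum_coeff]
    rw [Finset.sum_eq_single ℓ]
    · rw [Polynomial.coeff_monomial, if_pos rfl]
    · intro ℓ' _ hne
      rw [Polynomial.coeff_monomial, if_neg (fun hc => hne (Fin.ext hc))]
    · intro habs
      exact absurd (Finset.mem_univ ℓ) habs
  rw [hp0, Polynomial.coeff_zero] at hcoeff
  exact sub_eq_zero.mp hcoeff.symm
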